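/- Let φ, φ̃ ∈ X and h = φ̃ − φ. Then the map (λ,e) ↦ a_{φ+λh}(e) is C¹ on [0,1]×(-∞,0) with ∂_λ a_{φ+λh}(e) = −4π√2 ∫_{ℝ³}(e − φ(x) − λh(x))₊^{1/2} h(x) dx. -/

import Mathlib

open MeasureTheory Real Filter Set ENNReal

noncomputable section

abbrev R3 := EuclideanSpace ℝ (Fin 3)

def mX (φ : R3 → ℝ) : ℝ := ⨅ x : R3, (1 + ‖x‖) * |φ x|

def memX (φ : R3 → ℝ) : Prop :=
  Continuous φ ∧ (∀ x, φ x ≤ 0) ∧ Tendsto φ (cocompact R3) (nhds 0) ∧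
    Integrable (fun x => ‖fderiv ℝ φ x‖ ^ 2) ∧ 0 < mX φ

def aphi (φ : R3 → ℝ) (e : ℝ) : ℝ :=
  (8 * π * Real.sqrt 2 / 3) * ∫ x : R3, (max (e - φ x) 0) ^ ((3 : ℝ) / 2)

lemma hasDerivAt_maxpow (t : ℝ) :
    HasDerivAt (fun s : ℝ => (max s 0) ^ ((3:ℝ)/2)) ((3/2) * (max t 0) ^ ((1:ℝ)/2)) t := by
  rcases lt_trichotomy t 0 with ht | rfl | ht
  · have hev : (fun s : ℝ => (max s 0) ^ ((3:ℝ)/2)) =ᶠ[nhds t] fun _ => (0:ℝ) ^ ((3:ℝ)/2) := by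
      filter_upwards [Iio_mem_nhds ht] with s hs
      rw [max_eq_right hs.le]
    have h0 : HasDerivAt (fun _ : ℝ => (0:ℝ) ^ ((3:ℝ)/2)) 0 t := hasDerivAt_const _ _
    have h1 := h0.congr_of_eventuallyEq hev
    have : (3:ℝ)/2 * (max t 0) ^ ((1:ℝ)/2) = 0 := by
      rw [max_eq_right ht.le, Real.zero_rpow (by norm_num)]
      ring
    rw [this]
    exact h1
  · have : (3:ℝ)/2 * (max 0 0 : ℝ) ^ ((1:ℝ)/2) = 0 := by
      rw [max_self, Real.zero_rpow (by norm_num)]; ring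
    rw [this, hasDerivAt_iff_tendsto_slope]
    have hb : ∀ s : ℝ, s ≠ 0 → ‖slope (fun s : ℝ => (max s 0) ^ ((3:ℝ)/2)) 0 s‖ ≤ |s| ^ ((1:ℝ)/2) := by
      intro s hs
      have h0 : (max (0:ℝ) 0) ^ ((3:ℝ)/2) = 0 := by
        rw [max_self, Real.zero_rpow (by norm_num)]
      rw [slope_def_field]
      have hup : (max s 0) ^ ((3:ℝ)/2) ≤ |s| ^ ((3:ℝ)/2) :=
        Real.rpow_le_rpow (le_max_right s 0) (max_le (le_abs_self s) (abs_nonneg s)) (by norm_num)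
      have hlo : (0:ℝ) ≤ (max s 0) ^ ((3:ℝ)/2) := Real.rpow_nonneg (le_max_right s 0) _
      have habs : (0:ℝ) < |s| := abs_pos.2 hs
      rw [Real.norm_eq_abs, h0, sub_zero, sub_zero, div_eq_mul_inv, abs_mul, abs_inv]
      rw [abs_of_nonneg hlo]
      have key : |s| ^ ((3:ℝ)/2) * |s|⁻¹ = |s| ^ ((1:ℝ)/2) := by
        rw [← Real.rpow_neg_one |s|, ← Real.rpow_add habs]
        norm_num
      calc (max s 0) ^ ((3:ℝ)/2) * |s|⁻¹ ≤ |s| ^ ((3:ℝ)/2) * |s|⁻¹ := by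
            exact mul_le_mul_of_nonneg_right hup (by positivity)
        _ = |s| ^ ((1:ℝ)/2) := key
    have hbev : ∀ᶠ s in nhdsWithin (0:ℝ) {(0:ℝ)}ᶜ, ‖slope (fun s : ℝ => (max s 0) ^ ((3:ℝ)/2)) 0 s‖ ≤ |s| ^ ((1:ℝ)/2) := by
      filter_upwards [self_mem_nhdsWithin] with s hs
      exact hb s hs
    apply squeeze_zero_norm' hbev
    have hc : Continuous (fun s : ℝ => |s| ^ ((1:ℝ)/2)) :=
        (Real.continuous_rpow_const (by norm_num)).comp continuous_abs
    have := hc.tendsto 0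
    simp only [abs_zero, Real.zero_rpow (by norm_num : ((1:ℝ)/2) ≠ 0)] at this
    exact this.mono_left nhdsWithin_le_nhds
  · have base : HasDerivAt (fun s : ℝ => s ^ ((3:ℝ)/2)) ((3:ℝ)/2 * t ^ ((3:ℝ)/2 - 1)) t :=
      Real.hasDerivAt_rpow_const (Or.inl ht.ne')
    have hev : (fun s : ℝ => (max s 0) ^ ((3:ℝ)/2)) =ᶠ[nhds t] fun s : ℝ => s ^ ((3:ℝ)/2) := by
      filter_upwards [Ioi_mem_nhds ht] with s hs
      rw [max_eq_left hs.le]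
    have h1 := base.congr_of_eventuallyEq hev
    have : (3:ℝ)/2 * (max t 0) ^ ((1:ℝ)/2) = (3:ℝ)/2 * t ^ ((3:ℝ)/2 - 1) := by
      rw [max_eq_left ht.le]; norm_num
    rw [this]
    exact h1

def Lmap (c : ℝ) : ℝ × ℝ →L[ℝ] ℝ :=
  ContinuousLinearMap.snd ℝ ℝ ℝ - c • ContinuousLinearMap.fst ℝ ℝ ℝ

def F'fun (φ φ' : R3 → ℝ) (q : ℝ × ℝ) (x : R3) : ℝ × ℝ →L[ℝ] ℝ :=
  ((3/2) * (max (q.2 - (φ x + q.1 * (φ' x - φ x))) 0) ^ ((1:ℝ)/2)) • Lmap (φ' x - φ x)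

def Ffun (φ φ' : R3 → ℝ) (q : ℝ × ℝ) (x : R3) : ℝ :=
  (max (q.2 - (φ x + q.1 * (φ' x - φ x))) 0) ^ ((3:ℝ)/2)

def Gfun (φ φ' : R3 → ℝ) (q : ℝ × ℝ) : ℝ := ∫ x : R3, Ffun φ φ' q x

def Dfun (φ φ' : R3 → ℝ) (q : ℝ × ℝ) : ℝ × ℝ →L[ℝ] ℝ := ∫ x : R3, F'fun φ φ' q x

theorem aux_main (φ φ' : R3 → ℝ) (hφc : Continuous φ) (hφ'c : Continuous φ')
    (hφ0 : Tendsto φ (cocompact R3) (nhds 0)) (hφ'0 : Tendsto φ' (cocompact R3) (nhds 0)) :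
    ∀ q₀ ∈ (Ioo (-1:ℝ) 2) ×ˢ (Iio (0:ℝ)),
      HasFDerivAt (Gfun φ φ') (Dfun φ φ' q₀) q₀ ∧ ContinuousAt (Dfun φ φ') q₀ ∧
        Integrable (F'fun φ φ' q₀) := by
  intro q₀ hq₀
  have hl₀ : -1 < q₀.1 ∧ q₀.1 < 2 := ⟨hq₀.1.1, hq₀.1.2⟩
  have he₀ : q₀.2 < 0 := hq₀.2
  set ε := min 1 (-q₀.2/2) with hεdef
  have hε : (0:ℝ) < ε := lt_min one_pos (by linarith)
  have hε1 : ε ≤ 1 := min_le_left _ _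
  have hε2 : ε ≤ -q₀.2/2 := min_le_right _ _
  have hc : (0:ℝ) < -q₀.2/12 := by linarith
  -- compact set outside which |φ| + |φ'| is small
  have htend : Tendsto (fun x : R3 => |φ x| + |φ' x|) (cocompact R3) (nhds 0) := by
    have := hφ0.abs.add hφ'0.abs
    simpa using this
  have hev : ∀ᶠ x : R3 in cocompact R3, |φ x| + |φ' x| < -q₀.2/12 :=
    htend.eventually_lt_const hc
  obtain ⟨K, hKc, hKsub⟩ := mem_cocompact.mp hev
  have hK' : ∀ x : R3, x ∉ K → |φ x| + |φ' x| < -q₀.2/12 := fun x hx => hKsub hx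
  -- bound on K
  obtain ⟨C₀, hC₀⟩ := hKc.exists_bound_of_continuousOn
    ((hφc.abs.add hφ'c.abs).add (hφ'c.sub hφc).abs).continuousOn
  set C₁ := max C₀ 0 with hC₁def
  have hC₁0 : (0:ℝ) ≤ C₁ := le_max_right _ _
  have hC₁ : ∀ x ∈ K, |φ x| + |φ' x| + |φ' x - φ x| ≤ C₁ := by
    intro x hx
    have h1 := hC₀ x hx
    rw [Real.norm_eq_abs] at h1
    have h2 := (le_abs_self (|φ x| + |φ' x| + |φ' x - φ x|)).trans h1
    exact h2.trans (le_max_left _ _)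
  set B := -q₀.2 + 1 + 4*C₁ with hBdef
  have hB0 : (0:ℝ) < B := by simp only [hBdef]; linarith
  -- ball facts
  have hball : ∀ q ∈ Metric.ball q₀ ε,
      |q.1| < 3 ∧ |1 - q.1| < 3 ∧ q.2 ≤ q₀.2/2 ∧ |q.2| ≤ -q₀.2 + 1 := by
    intro q hq
    have hd := Metric.mem_ball.mp hq
    rw [Prod.dist_eq, max_lt_iff, Real.dist_eq, Real.dist_eq] at hd
    have ha1 := abs_lt.mp hd.1
    have ha2 := abs_lt.mp hd.2
    refine ⟨abs_lt.mpr ⟨by linarith [hl₀.1, hl₀.2], by linarith [hl₀.1, hl₀.2]⟩,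
      abs_lt.mpr ⟨by linarith [hl₀.1, hl₀.2], by linarith [hl₀.1, hl₀.2]⟩,
      by linarith, abs_le.mpr ⟨by linarith, by linarith⟩⟩
  -- support
  have hsupp : ∀ q ∈ Metric.ball q₀ ε, ∀ x, x ∉ K →
      q.2 - (φ x + q.1 * (φ' x - φ x)) ≤ 0 := by
    intro q hq x hx
    obtain ⟨hq1, hq1', hq2, -⟩ := hball q hq
    have hxa := hK' x hx
    have e1 : φ x + q.1 * (φ' x - φ x) = (1 - q.1) * φ x + q.1 * φ' x := by ring
    have h1 : -(3*|φ x|) ≤ (1 - q.1) * φ x := by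
      have l1 := neg_abs_le ((1 - q.1) * φ x)
      have l2 := abs_mul (1 - q.1) (φ x)
      have l3 := mul_le_mul_of_nonneg_right hq1'.le (abs_nonneg (φ x))
      linarith
    have h2 : -(3*|φ' x|) ≤ q.1 * φ' x := by
      have l1 := neg_abs_le (q.1 * φ' x)
      have l2 := abs_mul q.1 (φ' x)
      have l3 := mul_le_mul_of_nonneg_right hq1.le (abs_nonneg (φ' x))
      linarith
    rw [e1]
    linarith
  -- pointwise bound
  have hmax : ∀ q ∈ Metric.ball q₀ ε, ∀ x ∈ K,
      max (q.2 - (φ x + q.1 * (φ' x - φ x))) 0 ≤ B := by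
    intro q hq x hx
    obtain ⟨hq1, -, -, hq2abs⟩ := hball q hq
    have h3 := hC₁ x hx
    have hb1 : -(3 * |φ' x - φ x|) ≤ q.1 * (φ' x - φ x) := by
      have l1 := neg_abs_le (q.1 * (φ' x - φ x))
      have l2 := abs_mul q.1 (φ' x - φ x)
      have l3 := mul_le_mul_of_nonneg_right hq1.le (abs_nonneg (φ' x - φ x))
      linarith
    have hb2 : -|φ x| ≤ φ x := neg_abs_le _
    have hq2 : q.2 ≤ -q₀.2 + 1 := (le_abs_self q.2).trans hq2abs
    refine max_le ?_ hB0.le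
    simp only [hBdef]
    linarith [abs_nonneg (φ x), abs_nonneg (φ' x), abs_nonneg (φ' x - φ x)]
  -- operator norm bound
  have hL : ∀ x : R3, ‖Lmap (φ' x - φ x)‖ ≤ 1 + |φ' x - φ x| := by
    intro x
    refine ContinuousLinearMap.opNorm_le_bound _ (by positivity) fun v => ?_
    simp only [Lmap, ContinuousLinearMap.coe_sub', Pi.sub_apply,
      ContinuousLinearMap.coe_smul', Pi.smul_apply, ContinuousLinearMap.coe_snd',
      ContinuousLinearMap.coe_fst', smul_eq_mul, Real.norm_eq_abs]
    have hv1 : |v.1| ≤ ‖v‖ := by simpa [Real.norm_eq_abs] using norm_fst_le v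
    have hv2 : |v.2| ≤ ‖v‖ := by simpa [Real.norm_eq_abs] using norm_snd_le v
    have t1 : |v.2 - (φ' x - φ x) * v.1| ≤ |v.2| + |(φ' x - φ x) * v.1| := abs_sub _ _
    have t2 : |(φ' x - φ x) * v.1| = |φ' x - φ x| * |v.1| := abs_mul _ _
    have t3 : |φ' x - φ x| * |v.1| ≤ |φ' x - φ x| * ‖v‖ :=
      mul_le_mul_of_nonneg_left hv1 (abs_nonneg _)
    nlinarith [norm_nonneg v, abs_nonneg (φ' x - φ x)]
  -- norm bound on F'
  have hF'norm : ∀ q ∈ Metric.ball q₀ ε, ∀ x : R3,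
      ‖F'fun φ φ' q x‖ ≤ K.indicator (fun _ => (3:ℝ)/2 * B^((1:ℝ)/2) * (1+C₁)) x := by
    intro q hq x
    by_cases hx : x ∈ K
    · rw [indicator_of_mem hx]
      have hsc : (0:ℝ) ≤ (3:ℝ)/2 * (max (q.2 - (φ x + q.1 * (φ' x - φ x))) 0) ^ ((1:ℝ)/2) := by
        have := Real.rpow_nonneg (le_max_right (q.2 - (φ x + q.1 * (φ' x - φ x))) 0) ((1:ℝ)/2)
        linarith
      have hn : ‖F'fun φ φ' q x‖ ≤
          ((3:ℝ)/2 * (max (q.2 - (φ x + q.1 * (φ' x - φ x))) 0) ^ ((1:ℝ)/2)) *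
            ‖Lmap (φ' x - φ x)‖ := by
        rw [F'fun]
        refine le_trans (ContinuousLinearMap.opNorm_smul_le _ _) ?_
        rw [Real.norm_eq_abs, abs_of_nonneg hsc]
      refine hn.trans ?_
      have h1 : (max (q.2 - (φ x + q.1 * (φ' x - φ x))) 0) ^ ((1:ℝ)/2) ≤ B ^ ((1:ℝ)/2) :=
        Real.rpow_le_rpow (le_max_right _ 0) (hmax q hq x hx) (by norm_num)
      have h2 : ‖Lmap (φ' x - φ x)‖ ≤ 1 + C₁ := by
        have := hC₁ x hx
        have := abs_nonneg (φ x)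
        have := abs_nonneg (φ' x)
        have := hL x
        linarith
      have hBr : (0:ℝ) ≤ B ^ ((1:ℝ)/2) := Real.rpow_nonneg hB0.le _
      calc ((3:ℝ)/2 * (max (q.2 - (φ x + q.1 * (φ' x - φ x))) 0) ^ ((1:ℝ)/2)) *
            ‖Lmap (φ' x - φ x)‖
          ≤ ((3:ℝ)/2 * B ^ ((1:ℝ)/2)) * (1 + C₁) := by
            apply mul_le_mul (by linarith) h2 (norm_nonneg _) (by positivity)
        _ = (3:ℝ)/2 * B^((1:ℝ)/2) * (1+C₁) := by ring
    · rw [indicator_of_notMem hx]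
      have ht := hsupp q hq x hx
      have hz : F'fun φ φ' q x = 0 := by
        rw [F'fun, max_eq_right ht, Real.zero_rpow (by norm_num : ((1:ℝ)/2) ≠ 0)]
        simp
      simp [hz]
  have hbound_int : Integrable (K.indicator fun _ : R3 => (3:ℝ)/2 * B^((1:ℝ)/2) * (1+C₁)) := by
    rw [integrable_indicator_iff hKc.measurableSet]
    exact integrableOn_const hKc.measure_lt_top.ne
  -- continuity in x
  have hFc : ∀ q : ℝ × ℝ, Continuous (fun x => Ffun φ φ' q x) := by
    intro q
    exact (Real.continuous_rpow_const (by norm_num)).comp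
      ((continuous_const.sub (hφc.add (continuous_const.mul (hφ'c.sub hφc)))).max
        continuous_const)
  have hLc : Continuous (fun x : R3 => Lmap (φ' x - φ x)) := by
    unfold Lmap
    exact continuous_const.sub ((hφ'c.sub hφc).smul continuous_const)
  have hF'c : ∀ q : ℝ × ℝ, Continuous (fun x => F'fun φ φ' q x) := by
    intro q
    unfold F'fun
    exact (continuous_const.mul ((Real.continuous_rpow_const (by norm_num)).comp
      ((continuous_const.sub (hφc.add (continuous_const.mul (hφ'c.sub hφc)))).max
        continuous_const))).smul hLc
  have hF'qc : ∀ x : R3, Continuous (fun q : ℝ × ℝ => F'fun φ φ' q x) := by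
    intro x
    unfold F'fun
    exact (continuous_const.mul ((Real.continuous_rpow_const (by norm_num)).comp
      ((continuous_snd.sub (continuous_const.add (continuous_fst.mul continuous_const))).max
        continuous_const))).smul continuous_const
  -- differentiability
  have hdiff : ∀ (x : R3) (q : ℝ × ℝ),
      HasFDerivAt (fun q : ℝ × ℝ => Ffun φ φ' q x) (F'fun φ φ' q x) q := by
    intro x q
    have h1 : HasFDerivAt (fun q : ℝ × ℝ => q.1 * (φ' x - φ x))
        ((φ' x - φ x) • ContinuousLinearMap.fst ℝ ℝ ℝ) q :=
      (hasFDerivAt_fst (p := q)).mul_const _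
    have h2 := ((hasFDerivAt_const (φ x) q).add h1)
    have h3 := (hasFDerivAt_snd (p := q)).sub h2
    have hinner : HasFDerivAt (fun q : ℝ × ℝ => q.2 - (φ x + q.1 * (φ' x - φ x)))
        (Lmap (φ' x - φ x)) q := by
      rw [zero_add] at h3
      exact h3
    have houter := hasDerivAt_maxpow (q.2 - (φ x + q.1 * (φ' x - φ x)))
    exact houter.comp_hasFDerivAt q hinner
  -- integrability of F q₀
  have hq₀mem : q₀ ∈ Metric.ball q₀ ε := Metric.mem_ball_self hε
  have hFint : Integrable (fun x => Ffun φ φ' q₀ x) := by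
    refine Integrable.mono' (g := K.indicator fun _ => B^((3:ℝ)/2)) ?_
      (hFc q₀).aestronglyMeasurable (Eventually.of_forall fun x => ?_)
    · rw [integrable_indicator_iff hKc.measurableSet]
      exact integrableOn_const hKc.measure_lt_top.ne
    · by_cases hx : x ∈ K
      · rw [indicator_of_mem hx]
        have h0 : (0:ℝ) ≤ Ffun φ φ' q₀ x :=
          Real.rpow_nonneg (le_max_right _ _) _
        rw [Real.norm_eq_abs, abs_of_nonneg h0]
        exact Real.rpow_le_rpow (le_max_right _ _) (hmax q₀ hq₀mem x hx) (by norm_num)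
      · rw [indicator_of_notMem hx]
        have ht := hsupp q₀ hq₀mem x hx
        simp [Ffun, max_eq_right ht, Real.zero_rpow (by norm_num : ((3:ℝ)/2) ≠ 0)]
  have hF'int : Integrable (F'fun φ φ' q₀) :=
    Integrable.mono' hbound_int (hF'c q₀).aestronglyMeasurable
      (Eventually.of_forall fun x => hF'norm q₀ hq₀mem x)
  refine ⟨?_, ?_, hF'int⟩
  · exact hasFDerivAt_integral_of_dominated_of_fderiv_le (Metric.ball_mem_nhds q₀ hε)
      (Eventually.of_forall fun q => (hFc q).aestronglyMeasurable) hFint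
      (hF'c q₀).aestronglyMeasurable
      (Eventually.of_forall fun x q hq => hF'norm q hq x) hbound_int
      (Eventually.of_forall fun x q _ => hdiff x q)
  · exact continuousAt_of_dominated
      (Eventually.of_forall fun q => (hF'c q).aestronglyMeasurable)
      (eventually_of_mem (Metric.ball_mem_nhds q₀ hε) fun q hq =>
        Eventually.of_forall fun x => hF'norm q hq x)
      hbound_int (Eventually.of_forall fun x => (hF'qc x).continuousAt)

theorem jacobian_lambda_derivative (φ φ' : R3 → ℝ) (hφ : memX φ) (hφ' : memX φ')
    (h : R3 → ℝ) (hh : h = φ' - φ) :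
    ContDiffOn ℝ 1 (fun q : ℝ × ℝ => aphi (fun x => φ x + q.1 * h x) q.2)
      ((Icc (0 : ℝ) 1) ×ˢ (Iio (0 : ℝ))) ∧
    ∀ lam ∈ Icc (0 : ℝ) 1, ∀ e < (0 : ℝ),
      HasDerivAt (fun l : ℝ => aphi (fun x => φ x + l * h x) e)
        (-(4 * π * Real.sqrt 2) *
          ∫ x : R3, (max (e - φ x - lam * h x) 0) ^ ((1 : ℝ) / 2) * h x) lam := by
  obtain ⟨hφc, -, hφ0, -, -⟩ := hφ
  obtain ⟨hφ'c, -, hφ'0, -, -⟩ := hφ'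
  subst hh
  have key := aux_main φ φ' hφc hφ'c hφ0 hφ'0
  have hU : IsOpen ((Ioo (-1:ℝ) 2) ×ˢ (Iio (0:ℝ))) := isOpen_Ioo.prod isOpen_Iio
  have hsub : (Icc (0:ℝ) 1) ×ˢ (Iio (0:ℝ)) ⊆ (Ioo (-1:ℝ) 2) ×ˢ (Iio (0:ℝ)) :=
    prod_mono (Icc_subset_Ioo (by norm_num) (by norm_num)) subset_rfl
  have hGC1 : ContDiffOn ℝ 1 (Gfun φ φ') ((Ioo (-1:ℝ) 2) ×ˢ (Iio (0:ℝ))) := by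
    rw [show (1 : WithTop ℕ∞) = 0 + 1 from (zero_add 1).symm,
      contDiffOn_succ_iff_fderiv_of_isOpen hU]
    refine ⟨fun q hq => ((key q hq).1).differentiableAt.differentiableWithinAt,
      by simp, ?_⟩
    rw [contDiffOn_zero]
    exact ContinuousOn.congr
      (fun q hq => ((key q hq).2.1).continuousWithinAt)
      (fun q hq => ((key q hq).1).fderiv)
  have hfun : (fun q : ℝ × ℝ => aphi (fun x => φ x + q.1 * (φ' - φ) x) q.2) =
      fun q => (8 * π * Real.sqrt 2 / 3) * Gfun φ φ' q := by
    funext q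
    simp only [aphi, Gfun, Ffun, Pi.sub_apply]
  constructor
  · rw [hfun]
    exact (contDiffOn_const.mul hGC1).mono hsub
  · intro lam hlam e he
    have hq : ((lam, e) : ℝ × ℝ) ∈ (Ioo (-1:ℝ) 2) ×ˢ (Iio (0:ℝ)) :=
      ⟨⟨by linarith [hlam.1], by linarith [hlam.2]⟩, he⟩
    obtain ⟨hFD, -, hInt⟩ := key (lam, e) hq
    have h1 : HasDerivAt (fun l : ℝ => ((l, e) : ℝ × ℝ)) ((1:ℝ), (0:ℝ)) lam :=
      (hasDerivAt_id lam).prodMk (hasDerivAt_const lam e)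
    have h2 : HasDerivAt (fun l : ℝ => Gfun φ φ' (l, e))
        (Dfun φ φ' (lam, e) (1, 0)) lam := by
      have := hFD.comp_hasDerivAt lam h1
      exact this
    have h3 := h2.const_mul (8 * π * Real.sqrt 2 / 3)
    have hval : (8 * π * Real.sqrt 2 / 3) * (Dfun φ φ' (lam, e) ((1:ℝ), (0:ℝ))) =
        -(4 * π * Real.sqrt 2) *
          ∫ x : R3, (max (e - φ x - lam * (φ' - φ) x) 0) ^ ((1 : ℝ) / 2) * (φ' - φ) x := by
      have e1 : Dfun φ φ' (lam, e) ((1:ℝ), (0:ℝ)) = ∫ x : R3, F'fun φ φ' (lam, e) x ((1:ℝ), (0:ℝ)) := by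
        rw [Dfun]
        exact ContinuousLinearMap.integral_apply hInt _
      rw [e1]
      have e2 : ∀ x : R3, F'fun φ φ' (lam, e) x ((1:ℝ), (0:ℝ)) =
          (-(3:ℝ)/2) * ((max (e - φ x - lam * (φ' x - φ x)) 0) ^ ((1:ℝ)/2) * (φ' x - φ x)) := by
        intro x
        simp [F'fun, Lmap, sub_sub]
        ring
      rw [integral_congr_ae (Eventually.of_forall e2), integral_const_mul]
      simp only [Pi.sub_apply]
      ring
    rw [hfun] at *
    have h4 : (fun l : ℝ => aphi (fun x => φ x + l * (φ' - φ) x) e) =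
        fun l : ℝ => (8 * π * Real.sqrt 2 / 3) * Gfun φ φ' (l, e) := by
      funext l
      simp only [aphi, Gfun, Ffun, Pi.sub_apply]
    rw [h4, ← hval]
    exact h3
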